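/- arXiv:1608.07544 — 2 statements merged into one kernel-verified Lean document; each statement's English description precedes it below -/
import Mathlib

section
/- Under the assumptions of the two previous results combined: let x⋆ be optimal for minimize f₀(x) s.t. fᵢ(x) ≤ 0 (i ∈ [p]) with optimal multipliers λ⋆, and let x̂⋆ minimize the slack-relaxed barrier Φ(x) = f₀(x) - (1/c) Σᵢ log(s - fᵢ(x)) with c > 0, s ≥ 0. Then |f₀(x̂⋆) - f₀(x⋆)| ≤ p/c + s · Σᵢ λᵢ⋆. -/
open Filter Topology

/-- combined slack + barrier suboptimality bound. -/
theorem stmt_7 {n p : ℕ} (f₀ : EuclideanSpace ℝ (Fin n) → ℝ)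
    (f : Fin p → EuclideanSpace ℝ (Fin n) → ℝ)
    (hf₀ : ConvexOn ℝ Set.univ f₀) (hf₀d : Differentiable ℝ f₀)
    (hf : ∀ i, ConvexOn ℝ Set.univ (f i)) (hfd : ∀ i, Differentiable ℝ (f i))
    (xs : EuclideanSpace ℝ (Fin n)) (hxs_feas : ∀ i, f i xs ≤ 0)
    (hxs_opt : ∀ x, (∀ i, f i x ≤ 0) → f₀ xs ≤ f₀ x)
    (lam : Fin p → ℝ) (hlam : ∀ i, 0 ≤ lam i)
    (hdual : ∀ x, f₀ xs ≤ f₀ x + ∑ i, lam i * f i x)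
    (c s : ℝ) (hc : 0 < c) (hs : 0 ≤ s)
    (xhat : EuclideanSpace ℝ (Fin n)) (hxhat_dom : ∀ i, f i xhat < s)
    (hxhat_opt : ∀ x, (∀ i, f i x < s) →
      f₀ xhat - (1 / c) * ∑ i, Real.log (s - f i xhat) ≤
        f₀ x - (1 / c) * ∑ i, Real.log (s - f i x)) :
    |f₀ xhat - f₀ xs| ≤ (p : ℝ) / c + s * ∑ i, lam i := by
  have hL : 0 ≤ ∑ i, lam i := Finset.sum_nonneg fun i _ => hlam i
  have hB : 0 ≤ (p : ℝ) / c := div_nonneg (Nat.cast_nonneg p) hc.le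
  -- lower bound
  have hlow : f₀ xs - f₀ xhat ≤ s * ∑ i, lam i := by
    have h1 := hdual xhat
    have h2 : ∑ i, lam i * f i xhat ≤ ∑ i, lam i * s :=
      Finset.sum_le_sum fun i _ => mul_le_mul_of_nonneg_left (hxhat_dom i).le (hlam i)
    have h3 : ∑ i, lam i * s = s * ∑ i, lam i := by
      rw [← Finset.sum_mul]; ring
    linarith
  -- upper bound
  have hup : f₀ xhat - f₀ xs ≤ (p : ℝ) / c := by
    have key : ∀ t ∈ Set.Ioo (0 : ℝ) 1,
        f₀ xhat - f₀ xs ≤ -((p : ℝ) / c) * (Real.log (1 - t) / t) := by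
      intro t ht
      obtain ⟨ht0, ht1⟩ := ht
      set y := (1 - t) • xhat + t • xs with hy
      have hpos : ∀ i, (1 - t) * (s - f i xhat) ≤ s - f i y := by
        intro i
        have hconv := (hf i).2 (Set.mem_univ xhat) (Set.mem_univ xs)
          (by linarith : (0:ℝ) ≤ 1 - t) ht0.le (by ring)
        have hfe := hxs_feas i
        simp only [smul_eq_mul] at hconv
        nlinarith
      have hdom : ∀ i, f i y < s := by
        intro i
        have h1 : 0 < (1 - t) * (s - f i xhat) :=
          mul_pos (by linarith) (by linarith [hxhat_dom i])
        linarith [hpos i]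
      have hopt := hxhat_opt y hdom
      have hlog : ∀ i, Real.log (1 - t) + Real.log (s - f i xhat) ≤ Real.log (s - f i y) := by
        intro i
        rw [← Real.log_mul (by linarith) (by linarith [hxhat_dom i])]
        exact Real.log_le_log (mul_pos (by linarith) (by linarith [hxhat_dom i])) (hpos i)
      have hsum : (p : ℝ) * Real.log (1 - t) + ∑ i, Real.log (s - f i xhat)
          ≤ ∑ i, Real.log (s - f i y) := by
        have h := Finset.sum_le_sum (fun i (_ : i ∈ Finset.univ) => hlog i)
        simpa [Finset.sum_add_distrib, Finset.card_univ, nsmul_eq_mul] using h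
      have hf0y : f₀ y ≤ (1 - t) * f₀ xhat + t * f₀ xs := by
        have h := hf₀.2 (Set.mem_univ xhat) (Set.mem_univ xs)
          (by linarith : (0:ℝ) ≤ 1 - t) ht0.le (by ring)
        simpa using h
      have hmulsum : (1 / c) * ((p : ℝ) * Real.log (1 - t) + ∑ i, Real.log (s - f i xhat))
          ≤ (1 / c) * ∑ i, Real.log (s - f i y) :=
        mul_le_mul_of_nonneg_left hsum (by positivity)
      have heq : (1 / c) * ((p : ℝ) * Real.log (1 - t)) = ((p : ℝ) / c) * Real.log (1 - t) := by
        field_simp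
      have hmain : t * (f₀ xhat - f₀ xs) ≤ -((p : ℝ) / c) * Real.log (1 - t) := by
        nlinarith [hopt, hmulsum, hf0y]
      rw [mul_div_assoc' (-((p : ℝ) / c)) _ t, le_div_iff₀ ht0]
      nlinarith
    have hslope : Tendsto (fun t : ℝ => Real.log (1 - t) / t) (𝓝[>] (0:ℝ)) (𝓝 (-1)) := by
      have hd : HasDerivAt (fun t : ℝ => Real.log (1 - t)) (-1) 0 := by
        have h1 : HasDerivAt (fun t : ℝ => 1 - t) (-1) 0 := by
          simpa using (hasDerivAt_id (0:ℝ)).const_sub 1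
        have h2 := (Real.hasDerivAt_log (by norm_num : (1:ℝ) - 0 ≠ 0)).comp 0 h1
        simpa [Function.comp_def] using h2
      have h3 : Tendsto (slope (fun t : ℝ => Real.log (1 - t)) 0) (𝓝[>] 0) (𝓝 (-1)) :=
        (hasDerivAt_iff_tendsto_slope.mp hd).mono_left
          (nhdsWithin_mono _ (fun x hx => ne_of_gt hx))
      refine h3.congr (fun x => ?_)
      simp [slope_def_field]
    have hT : Tendsto (fun t : ℝ => -((p : ℝ) / c) * (Real.log (1 - t) / t)) (𝓝[>] (0:ℝ))
        (𝓝 ((p : ℝ) / c)) := by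
      have h := hslope.const_mul (-((p : ℝ) / c))
      simpa using h
    refine ge_of_tendsto hT ?_
    filter_upwards [Ioo_mem_nhdsGT_of_mem (by norm_num : (0:ℝ) ∈ Set.Ico 0 1)] with t ht
    exact key t ht
  have hsL : 0 ≤ s * ∑ i, lam i := mul_nonneg hs hL
  rw [abs_le]
  constructor <;> linarith
end

section
/- Let ψ : ℝ≥0 → ℝ be continuously differentiable with ψ(0) > 0, and suppose there exist ε > 0 and α > 0 such that ψ'(t) ≥ α·ψ(t) whenever 0 < ψ(t) < ε. Then ψ(t) > 0 for all t ≥ 0. -/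
/-- the boundary ψ = 0 is repelling, so the residual ψ stays
positive. -/
theorem stmt_12 (ψ : ℝ → ℝ) (hψ : ContDiff ℝ 1 ψ) (h0 : 0 < ψ 0)
    (ε α : ℝ) (hε : 0 < ε) (hα : 0 < α)
    (hrep : ∀ t : ℝ, 0 ≤ t → 0 < ψ t → ψ t < ε → α * ψ t ≤ deriv ψ t) :
    ∀ t : ℝ, 0 ≤ t → 0 < ψ t := by
  intro t ht
  by_contra hle
  push_neg at hle
  have hcont : Continuous ψ := hψ.continuous
  set S : Set ℝ := Set.Icc 0 t ∩ ψ ⁻¹' Set.Iic 0 with hS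
  have hSne : S.Nonempty := ⟨t, ⟨ht, le_refl t⟩, hle⟩
  have hSclosed : IsClosed S := isClosed_Icc.inter (isClosed_Iic.preimage hcont)
  have hSbdd : BddBelow S := ⟨0, fun s hs => hs.1.1⟩
  set c := sInf S with hc
  have hcS : c ∈ S := hSclosed.csInf_mem hSne hSbdd
  have hc0 : 0 ≤ c := hcS.1.1
  have hct : c ≤ t := hcS.1.2
  have hpos : ∀ s, 0 ≤ s → s < c → 0 < ψ s := by
    intro s hs hsc
    by_contra h
    push_neg at h
    have : c ≤ s := csInf_le hSbdd ⟨⟨hs, hsc.le.trans hct⟩, h⟩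
    linarith
  have hcpos : 0 < c := by
    rcases lt_or_eq_of_le hc0 with h | h
    · exact h
    · exfalso; have := hcS.2; simp only [Set.mem_preimage, Set.mem_Iic] at this
      rw [← h] at this; linarith
  have hψc : ψ c = 0 := by
    refine le_antisymm hcS.2 ?_
    have htend : Filter.Tendsto ψ (nhdsWithin c (Set.Iio c)) (nhds (ψ c)) :=
      (hcont.continuousAt).continuousWithinAt.tendsto
    refine ge_of_tendsto htend ?_
    have hmem : Set.Ioo 0 c ∈ nhdsWithin c (Set.Iio c) :=
      Ioo_mem_nhdsLT_of_mem ⟨hcpos, le_refl c⟩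
    filter_upwards [hmem] with s hs
    exact (hpos s hs.1.le hs.2).le
  -- find δ such that ψ s < ε near c
  have hnhds : ψ ⁻¹' Set.Iio ε ∈ nhds c := by
    have := hcont.continuousAt (x := c)
    rw [ContinuousAt, hψc] at this
    exact this (Iio_mem_nhds hε)
  rcases Metric.mem_nhds_iff.mp hnhds with ⟨δ, hδ, hball⟩
  set a := max (c - δ / 2) (c / 2) with ha
  have ha0 : 0 < a := lt_of_lt_of_le (by linarith) (le_max_right _ _)
  have hac : a < c := max_lt (by linarith) (by linarith)
  have hsmall : ∀ s ∈ Set.Ioo a c, ψ s < ε := by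
    intro s hs
    apply hball
    simp only [Metric.mem_ball, Real.dist_eq, abs_lt]
    constructor
    · have : c - δ / 2 ≤ a := le_max_left _ _
      linarith [hs.1]
    · linarith [hs.2, hδ]
  have hmono : StrictMonoOn ψ (Set.Icc a c) := by
    apply strictMonoOn_of_deriv_pos (convex_Icc a c) (hcont.continuousOn)
    intro s hs
    rw [interior_Icc] at hs
    have hs0 : 0 < s := lt_trans ha0 hs.1
    have hψs : 0 < ψ s := hpos s hs0.le hs.2
    have := hrep s hs0.le hψs (hsmall s hs)
    nlinarith
  have : ψ a < ψ c :=
    hmono ⟨le_refl a, hac.le⟩ ⟨hac.le, le_refl c⟩ hac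
  have hψa : 0 < ψ a := hpos a ha0.le hac
  rw [hψc] at this
  linarith
end
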